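/- arXiv:2007.12850 — 2 statements merged into one kernel-verified Lean document; each statement's English description precedes it below -/
import Mathlib

section
/- Let A be a symmetric 2×2 real matrix, let μ ≥ 0 and λ ≥ 0 be real numbers, and let C A = 2μ A + λ tr(A) I₂ denote the action of the isotropic fourth-order stiffness tensor on A. Then (C A) : (C A) ≤ (4μ + 2λ) ((C A) : A), where X : Y = tr(Xᵀ Y) denotes the Frobenius inner product of 2×2 real matrices. (Lemma 3.3 of the paper.) -/
open Matrix

/-- Lemma 3.3: for a symmetric 2×2 real matrix `A` and Lamé parameters `μ, lam ≥ 0`,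
with `CA = 2μ A + lam tr(A) I₂`, the Frobenius inner products satisfy
`(CA) : (CA) ≤ (4μ + 2lam) ((CA) : A)`, where `X : Y = tr(Xᵀ Y)`. -/
theorem stiffness_tensor_frobenius_bound
    (A : Matrix (Fin 2) (Fin 2) ℝ) (hA : A.IsSymm)
    (μ lam : ℝ) (hμ : 0 ≤ μ) (hlam : 0 ≤ lam)
    (CA : Matrix (Fin 2) (Fin 2) ℝ)
    (hCA : CA = (2 * μ) • A + (lam * A.trace) • (1 : Matrix (Fin 2) (Fin 2) ℝ)) :
    (CAᵀ * CA).trace ≤ (4 * μ + 2 * lam) * (CAᵀ * A).trace := by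
  have hb : A 1 0 = A 0 1 := by
    have := congrFun (congrFun hA 0) 1
    simpa [Matrix.transpose_apply] using this
  subst hCA
  simp only [Matrix.trace_fin_two, Matrix.mul_apply, Fin.sum_univ_two,
    Matrix.transpose_apply, Matrix.add_apply, Matrix.smul_apply, Matrix.one_apply,
    Matrix.trace_fin_two, smul_eq_mul]
  norm_num
  rw [hb]
  nlinarith [mul_nonneg (mul_nonneg hμ hμ) (sq_nonneg (A 0 0)),
    mul_nonneg (mul_nonneg hμ hμ) (sq_nonneg (A 1 1)),
    mul_nonneg (mul_nonneg hμ hμ) (sq_nonneg (A 0 1)),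
    mul_nonneg (mul_nonneg hμ hlam) (sq_nonneg (A 0 0)),
    mul_nonneg (mul_nonneg hμ hlam) (sq_nonneg (A 1 1)),
    mul_nonneg (mul_nonneg hμ hlam) (sq_nonneg (A 0 1))]
end

section
/- Let A be a symmetric 2×2 complex matrix, let μ ≥ 0 and λ ≥ 0 be real numbers, and let C A = 2μ A + λ tr(A) I₂. Then ‖C A‖_F² ≤ (4μ + 2λ) Re⟨C A, A⟩, where ⟨X, Y⟩ = tr(X (conj Y)ᵀ) and ‖X‖_F² = ⟨X, X⟩. (The complex-valued version of Lemma 3.3, as applied to the modified stress tensor C(∇_k ⊙ u) of complex-valued Bloch modes in the coercivity proof of Theorem 3.4.) -/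
open Matrix
/-- Complex version of Lemma 3.3: for a symmetric 2×2 complex matrix `A` and
real `μ, lam ≥ 0`, with `CA = 2μ A + lam tr(A) I₂`, one has
`‖CA‖_F² ≤ (4μ + 2lam) Re⟨CA, A⟩`, where `⟨X, Y⟩ = tr(X Yᴴ)` and `‖X‖_F² = ⟨X, X⟩`. -/
theorem stiffness_tensor_hermitian_frobenius_bound
    (A : Matrix (Fin 2) (Fin 2) ℂ) (hA : A.IsSymm)
    (μ lam : ℝ) (hμ : 0 ≤ μ) (hlam : 0 ≤ lam)
    (CA : Matrix (Fin 2) (Fin 2) ℂ)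
    (hCA : CA = ((2 * μ : ℝ) : ℂ) • A + ((lam : ℂ) * A.trace) • (1 : Matrix (Fin 2) (Fin 2) ℂ)) :
    ((CA * CAᴴ).trace).re ≤ (4 * μ + 2 * lam) * ((CA * Aᴴ).trace).re := by
  have hs : A 1 0 = A 0 1 := (hA.apply 1 0).symm
  subst hCA
  simp only [Matrix.trace, Matrix.diag, Matrix.mul_apply, Matrix.conjTranspose_apply,
    Matrix.add_apply, Matrix.smul_apply, Matrix.one_apply, Fin.sum_univ_two, hs,
    smul_eq_mul, Fin.isValue, if_true, if_false, ne_eq, Complex.star_def,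
    one_ne_zero, zero_ne_one, ite_true, ite_false, mul_one, mul_zero, add_zero, zero_add,
    _root_.map_add, _root_.map_mul, Complex.add_re, Complex.mul_re, Complex.mul_im, Complex.add_im,
    Complex.ofReal_re, Complex.ofReal_im, Complex.conj_re, Complex.conj_im, Complex.one_re, Complex.one_im, Complex.zero_re, Complex.zero_im, map_ofNat]
  set a := A 0 0; set b := A 0 1; set c := A 1 1
  ring_nf
  nlinarith [sq_nonneg (a.re - c.re), sq_nonneg (a.im - c.im), sq_nonneg (a.re + c.re), sq_nonneg (a.im + c.im), sq_nonneg b.re, sq_nonneg b.im, mul_nonneg hμ hlam, sq_nonneg μ, sq_nonneg lam, mul_nonneg (mul_nonneg hμ hlam) (sq_nonneg (a.re+c.re)), mul_nonneg (mul_nonneg hμ hlam) (sq_nonneg (a.im+c.im)), mul_nonneg (mul_nonneg hμ hμ) (sq_nonneg (a.re-c.re)), mul_nonneg (mul_nonneg hμ hμ) (sq_nonneg (a.im-c.im))]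
end
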